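/- Let E be a real finite-dimensional inner product space, L > 0, and ψ : E → ℝ differentiable with ψ(y) ≤ ψ(x) + ⟪∇ψ(x), y − x⟫ + (L/2)‖y − x‖² for all x, y ∈ E, and bounded below by ψ_min. Define the gradient descent iterates x_{t+1} = x_t − (1/L)·∇ψ(x_t) starting from x₀. Then for every integer T ≥ 1, min_{0 ≤ t < T} ‖∇ψ(x_t)‖ ≤ √(2L(ψ(x₀) − ψ_min)) / √T. -/
import Mathlib


open scoped NNReal RealInnerProductSpace

/-- Iteration complexity of gradient descent with constant step size `1/L` on an
`L`-smooth function bounded below: after `T ≥ 1` steps, some iterate `x_t` with `t < T`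
satisfies `‖∇ψ(x_t)‖ ≤ √(2L(ψ(x₀) - ψ_min))/√T`. -/
theorem gradient_descent_complexity
    {E : Type*} [NormedAddCommGroup E] [InnerProductSpace ℝ E] [FiniteDimensional ℝ E]
    (L : ℝ) (hL : 0 < L) (ψ : E → ℝ) (ψ' : E → E)
    (hgrad : ∀ x : E, HasGradientAt ψ (ψ' x) x)
    (hsmooth : ∀ x y : E, ψ y ≤ ψ x + ⟪ψ' x, y - x⟫ + (L / 2) * ‖y - x‖ ^ 2)
    (ψmin : ℝ) (hbdd : ∀ x : E, ψmin ≤ ψ x)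
    (x : ℕ → E) (hx : ∀ t : ℕ, x (t + 1) = x t - (1 / L) • ψ' (x t)) :
    ∀ T : ℕ, 1 ≤ T →
      ∃ t < T, ‖ψ' (x t)‖ ≤ Real.sqrt (2 * L * (ψ (x 0) - ψmin)) / Real.sqrt T := by
  intro T hT
  -- descent lemma
  have hdec : ∀ t : ℕ, ψ (x (t + 1)) ≤ ψ (x t) - (1 / (2 * L)) * ‖ψ' (x t)‖ ^ 2 := by
    intro t
    have h := hsmooth (x t) (x (t + 1))
    rw [hx t] at h ⊢
    have hsub : x t - (1 / L) • ψ' (x t) - x t = -((1 / L) • ψ' (x t)) := by abel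
    rw [hsub] at h
    have hinner : ⟪ψ' (x t), -((1 / L) • ψ' (x t))⟫ = -(1 / L) * ‖ψ' (x t)‖ ^ 2 := by
      rw [inner_neg_right, inner_smul_right, real_inner_self_eq_norm_sq]
      ring
    have hnorm : ‖-((1 / L) • ψ' (x t))‖ ^ 2 = (1 / L) ^ 2 * ‖ψ' (x t)‖ ^ 2 := by
      rw [norm_neg, norm_smul, mul_pow, Real.norm_eq_abs,
        abs_of_pos (by positivity : (0:ℝ) < 1 / L)]
    rw [hinner, hnorm] at h
    calc ψ (x t - (1 / L) • ψ' (x t)) ≤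
        ψ (x t) + -(1 / L) * ‖ψ' (x t)‖ ^ 2 + L / 2 * ((1 / L) ^ 2 * ‖ψ' (x t)‖ ^ 2) := h
      _ = ψ (x t) - (1 / (2 * L)) * ‖ψ' (x t)‖ ^ 2 := by field_simp; ring
  -- sum bound
  have hsum : ∀ n : ℕ, (1 / (2 * L)) * ∑ t ∈ Finset.range n, ‖ψ' (x t)‖ ^ 2
      ≤ ψ (x 0) - ψ (x n) := by
    intro n
    induction n with
    | zero => simp
    | succ n ih =>
      rw [Finset.sum_range_succ, mul_add]
      have := hdec n
      linarith
  have hsumT : ∑ t ∈ Finset.range T, ‖ψ' (x t)‖ ^ 2 ≤ 2 * L * (ψ (x 0) - ψmin) := by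
    have h1 := hsum T
    have h2 := hbdd (x T)
    have h3 : (1 / (2 * L)) * ∑ t ∈ Finset.range T, ‖ψ' (x t)‖ ^ 2
        ≤ ψ (x 0) - ψmin := by linarith
    have h4 : (0:ℝ) < 2 * L := by linarith
    rw [div_mul_eq_mul_div, one_mul, div_le_iff₀ h4] at h3
    linarith [h3]
  -- pick the minimizer
  obtain ⟨t, htT, hmin⟩ := Finset.exists_min_image (Finset.range T)
    (fun t => ‖ψ' (x t)‖) ⟨0, Finset.mem_range.2 hT⟩
  refine ⟨t, Finset.mem_range.1 htT, ?_⟩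
  have hTsum : (T : ℝ) * ‖ψ' (x t)‖ ^ 2 ≤ ∑ s ∈ Finset.range T, ‖ψ' (x s)‖ ^ 2 := by
    calc (T : ℝ) * ‖ψ' (x t)‖ ^ 2 = ∑ s ∈ Finset.range T, ‖ψ' (x t)‖ ^ 2 := by
          rw [Finset.sum_const, Finset.card_range, nsmul_eq_mul]
      _ ≤ ∑ s ∈ Finset.range T, ‖ψ' (x s)‖ ^ 2 := by
          apply Finset.sum_le_sum
          intro s hs
          exact pow_le_pow_left₀ (norm_nonneg _) (hmin s hs) 2
  have hkey : (T : ℝ) * ‖ψ' (x t)‖ ^ 2 ≤ 2 * L * (ψ (x 0) - ψmin) := le_trans hTsum hsumT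
  have hTpos : (0:ℝ) < Real.sqrt T := Real.sqrt_pos.2 (by exact_mod_cast hT)
  rw [le_div_iff₀ hTpos]
  calc ‖ψ' (x t)‖ * Real.sqrt T = Real.sqrt (‖ψ' (x t)‖ ^ 2) * Real.sqrt T := by
        rw [Real.sqrt_sq (norm_nonneg _)]
    _ = Real.sqrt (T * ‖ψ' (x t)‖ ^ 2) := by
        rw [← Real.sqrt_mul (by positivity), mul_comm]
    _ ≤ Real.sqrt (2 * L * (ψ (x 0) - ψmin)) := Real.sqrt_le_sqrt hkey
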